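/- Let (u_j) and (w_j) be constant-speed paths [-1,1] → Y into a complete CAT(0) space Y with the same endpoints, where w_j is the geodesic between those endpoints. Suppose E(u_j) and E(w_j) denote their energies ∫|u'|² and that E(w_j) ≤ E(u_j) = 1 for all j and E(w_j) → 1. Then sup_{x∈[-1,1]} d(u_j(x), w_j(x)) → 0 as j → ∞. -/

import Mathlib

open Set Metric Filter

/-- A geodesic segment parametrized proportionally to arc length on `[a,b]`. -/
def GeodesicSeg {X : Type*} [MetricSpace X] (γ : ℝ → X) (a b : ℝ) : Prop :=
  ∀ s ∈ Set.Icc a b, ∀ t ∈ Set.Icc a b,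
    (b - a) * dist (γ s) (γ t) = dist (γ a) (γ b) * |s - t|

/-- The CAT(0) (NPC) midpoint comparison inequality. -/
def CAT0 (X : Type*) [MetricSpace X] : Prop :=
  ∀ x y z m : X, dist y m = dist y z / 2 → dist m z = dist y z / 2 →
    dist x m ^ 2 ≤ dist x y ^ 2 / 2 + dist x z ^ 2 / 2 - dist y z ^ 2 / 4

/-- The metric speed (metric derivative) of a path at a point. -/
noncomputable def mspeed {Y : Type*} [MetricSpace Y] (u : ℝ → Y) (s : ℝ) : ℝ :=
  limUnder (nhdsWithin (0:ℝ) {(0:ℝ)}ᶜ) (fun h => dist (u (s + h)) (u s) / |h|)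

/-- The energy `∫₋₁¹ |u'|²` of a path on `[-1,1]`. -/
noncomputable def energy {Y : Type*} [MetricSpace Y] (u : ℝ → Y) : ℝ :=
  ∫ s in (-1:ℝ)..(1:ℝ), (mspeed u s) ^ 2



open MeasureTheory
open scoped Topology NNReal

lemma abs_deriv_le_of_lipschitz {f : ℝ → ℝ} {K : NNReal} (hf : LipschitzWith K f) (x : ℝ) :
    |deriv f x| ≤ K := by
  by_cases h : DifferentiableAt ℝ f x
  · have h' := h.hasDerivAt
    rw [hasDerivAt_iff_tendsto_slope] at h'
    apply le_of_tendsto h'.abs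
    filter_upwards [self_mem_nhdsWithin] with y hy
    have hyx : (y:ℝ) ≠ x := hy
    have hd : |f y - f x| ≤ K * |y - x| := by
      have := hf.dist_le_mul y x
      rwa [Real.dist_eq, Real.dist_eq] at this
    have h0 : (0:ℝ) < |y - x| := abs_pos.mpr (sub_ne_zero.mpr hyx)
    rw [slope_def_field, abs_div, div_le_iff₀ h0]
    exact hd
  · simp [deriv_zero_of_not_differentiableAt h]

/-- FTC for Lipschitz functions on ℝ. -/
lemma lipschitz_integral_deriv {f : ℝ → ℝ} {K : NNReal} (hf : LipschitzWith K f)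
    {a b : ℝ} (hab : a ≤ b) : f b - f a = ∫ x in a..b, deriv f x := by
  set g : ℕ → ℝ → ℝ := fun k x => (f (x + (1:ℝ)/(k+1)) - f x) * (k+1) with hg
  have hcont : Continuous f := hf.continuous
  have hmeas : ∀ k, AEStronglyMeasurable (g k) (volume.restrict (Set.Ioc a b)) := by
    intro k
    exact (((hcont.comp (continuous_add_right _)).sub hcont).mul continuous_const)
      |>.aestronglyMeasurable.restrict
  have hbound : ∀ k, ∀ᵐ x ∂(volume.restrict (Set.Ioc a b)), ‖g k x‖ ≤ (K:ℝ) := by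
    intro k
    refine Eventually.of_forall fun x => ?_
    have hd : |f (x + 1/(k+1)) - f x| ≤ K * |(1:ℝ)/(k+1)| := by
      have := hf.dist_le_mul (x + 1/(k+1)) x
      rwa [Real.dist_eq, Real.dist_eq, add_sub_cancel_left] at this
    have hk : |(1:ℝ)/(k+1)| = 1/(k+1) := abs_of_pos (by positivity)
    rw [Real.norm_eq_abs, hg]
    simp only
    rw [abs_mul]
    have h1 : |((k:ℝ)+1)| = (k:ℝ)+1 := abs_of_pos (by positivity)
    calc |f (x + 1/(k+1)) - f x| * |((k:ℝ)+1)|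
        ≤ (K * (1/(k+1))) * ((k:ℝ)+1) := by
          rw [h1]; apply mul_le_mul_of_nonneg_right _ (by positivity)
          rw [hk] at hd; exact hd
      _ = K := by field_simp
  have hlim : ∀ᵐ x ∂(volume.restrict (Set.Ioc a b)),
      Tendsto (fun k => g k x) atTop (𝓝 (deriv f x)) := by
    have hae : ∀ᵐ x ∂(volume : Measure ℝ), DifferentiableAt ℝ f x :=
      hf.ae_differentiableAt
    refine ae_restrict_of_ae ?_
    filter_upwards [hae] with x hx
    have h' := hx.hasDerivAt
    rw [hasDerivAt_iff_tendsto_slope] at h'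
    have hseq : Tendsto (fun k : ℕ => x + 1/(k+1)) atTop (𝓝[≠] x) := by
      apply tendsto_nhdsWithin_of_tendsto_nhds_of_eventually_within
      · have : Tendsto (fun k : ℕ => (1:ℝ)/(k+1)) atTop (𝓝 0) :=
          tendsto_one_div_add_atTop_nhds_zero_nat
        simpa using (tendsto_const_nhds.add this)
      · refine Eventually.of_forall fun k => ?_
        simp only [mem_compl_iff, mem_singleton_iff]
        intro hh
        have h2 : (0:ℝ) < 1/(k+1) := by positivity
        have : (1:ℝ)/(k+1) = 0 := by linarith
        linarith
    have hcomp := h'.comp hseq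
    apply hcomp.congr
    intro k
    simp only [Function.comp_apply]
    rw [slope_def_field]
    have hk : ((k:ℝ)+1) ≠ 0 := by positivity
    simp only [hg]
    rw [add_sub_cancel_left, div_div_eq_mul_div, div_one]
  have hconv : Tendsto (fun k => ∫ x in Set.Ioc a b, g k x) atTop
      (𝓝 (∫ x in Set.Ioc a b, deriv f x)) :=
    tendsto_integral_of_dominated_convergence (fun _ => (K:ℝ)) hmeas
      (integrable_const _) hbound hlim
  -- identify the limit of the integrals of g k
  have hint : ∀ c d : ℝ, IntervalIntegrable f volume c d := fun c d =>
    hcont.intervalIntegrable c d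
  have key : ∀ c : ℝ, Tendsto (fun k : ℕ => (∫ x in c..(c + 1/(k+1)), f x) * (k+1))
      atTop (𝓝 (f c)) := by
    intro c
    rw [← tendsto_sub_nhds_zero_iff]
    have hb : Tendsto (fun k : ℕ => (K:ℝ) * (1/(k+1))) atTop (𝓝 0) := by
      have : Tendsto (fun k : ℕ => (1:ℝ)/(k+1)) atTop (𝓝 0) :=
        tendsto_one_div_add_atTop_nhds_zero_nat
      simpa using tendsto_const_nhds.mul this
    refine squeeze_zero_norm (fun k => ?_) hb
    have hk : (0:ℝ) < 1/(k+1) := by positivity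
    have e1 : (∫ x in c..(c + 1/(k+1)), f x) * ((k:ℝ)+1) - f c
        = (∫ x in c..(c + 1/(k+1)), (f x - f c)) * ((k:ℝ)+1) := by
      rw [intervalIntegral.integral_sub (hint _ _) (intervalIntegrable_const)]
      rw [intervalIntegral.integral_const]
      have : (c + 1/(k+1) - c) = 1/((k:ℝ)+1) := by ring
      rw [this, smul_eq_mul]
      have hk' : ((k:ℝ)+1) ≠ 0 := by positivity
      field_simp
    rw [e1, Real.norm_eq_abs, abs_mul]
    have h2 : ‖∫ x in c..(c + 1/(k+1)), (f x - f c)‖ ≤ ((K:ℝ) * (1/(k+1))) * |c + 1/(k+1) - c| := by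
      apply intervalIntegral.norm_integral_le_of_norm_le_const
      intro x hx
      rw [Set.uIoc_of_le (by linarith)] at hx
      have : |f x - f c| ≤ K * |x - c| := by
        have := hf.dist_le_mul x c
        rwa [Real.dist_eq, Real.dist_eq] at this
      refine this.trans ?_
      have : |x - c| ≤ 1/(k+1) := by
        rw [abs_of_pos (by linarith [hx.1] : (0:ℝ) < x - c)]
        have := hx.2
        linarith
      exact mul_le_mul_of_nonneg_left this (by positivity)
    have h3 : |c + 1/(k+1) - c| = 1/((k:ℝ)+1) := by
      rw [show c + 1/((k:ℝ)+1) - c = 1/((k:ℝ)+1) by ring]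
      exact abs_of_pos hk
    rw [h3] at h2
    have h4 : |((k:ℝ)+1)| = (k:ℝ)+1 := abs_of_pos (by positivity)
    rw [Real.norm_eq_abs] at h2
    calc |∫ x in c..(c + 1/(k+1)), (f x - f c)| * |((k:ℝ)+1)|
        ≤ (((K:ℝ) * (1/(k+1))) * (1/((k:ℝ)+1))) * ((k:ℝ)+1) := by
          rw [h4]
          exact mul_le_mul_of_nonneg_right h2 (by positivity)
      _ = (K:ℝ) * (1/(k+1)) := by field_simp
  have hident : ∀ k : ℕ, ∫ x in Set.Ioc a b, g k x
      = (∫ x in b..(b + 1/(k+1)), f x) * (k+1) - (∫ x in a..(a + 1/(k+1)), f x) * (k+1) := by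
    intro k
    have h1 : ∫ x in Set.Ioc a b, g k x = ∫ x in a..b, g k x :=
      (intervalIntegral.integral_of_le hab).symm
    rw [h1, hg]
    simp only
    have hintg : IntervalIntegrable (fun x => f (x + 1/(k+1))) volume a b :=
      (hcont.comp (continuous_add_right _)).intervalIntegrable a b
    have e : ∫ x in a..b, (f (x + 1/(k+1)) - f x) * ((k:ℝ)+1)
        = ((∫ x in a..b, f (x + 1/(k+1))) - ∫ x in a..b, f x) * ((k:ℝ)+1) := by
      rw [← intervalIntegral.integral_sub hintg (hint a b)]
      rw [← intervalIntegral.integral_mul_const]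
    rw [e]
    have e2 : (∫ x in a..b, f (x + 1/(k+1))) = ∫ x in (a + 1/(k+1))..(b + 1/(k+1)), f x := by
      exact intervalIntegral.integral_comp_add_right (fun x => f x) _
    rw [e2]
    have e3 : (∫ x in (a + 1/(k+1))..(b + 1/(k+1)), f x) - (∫ x in a..b, f x)
        = (∫ x in b..(b + 1/(k+1)), f x) - ∫ x in a..(a + 1/(k+1)), f x := by
      have A : (∫ x in (a + 1/(k+1))..b, f x) + (∫ x in b..(b + 1/(k+1)), f x)
          = ∫ x in (a + 1/(k+1))..(b + 1/(k+1)), f x :=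
        intervalIntegral.integral_add_adjacent_intervals (hint _ _) (hint _ _)
      have B : (∫ x in a..(a + 1/(k+1)), f x) + (∫ x in (a + 1/(k+1))..b, f x)
          = ∫ x in a..b, f x :=
        intervalIntegral.integral_add_adjacent_intervals (hint _ _) (hint _ _)
      rw [← A, ← B]
      ring
    rw [e3]
    ring
  have hconv2 : Tendsto (fun k => ∫ x in Set.Ioc a b, g k x) atTop (𝓝 (f b - f a)) := by
    have := (key b).sub (key a)
    apply this.congr
    intro k
    rw [hident k]
  have := tendsto_nhds_unique hconv hconv2
  rw [intervalIntegral.integral_of_le hab, ← this]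

lemma length_bound {Y : Type*} [MetricSpace Y] (u : ℝ → Y) (K : NNReal)
    (hu : LipschitzWith K u) {c : ℝ}
    (hc : ∀ s ∈ Set.Icc (-1:ℝ) 1, mspeed u s = c) :
    0 ≤ c ∧ ∀ a b : ℝ, -1 ≤ a → a ≤ b → b ≤ 1 → dist (u a) (u b) ≤ c * (b - a) := by
  classical
  -- dense sequence in the range of u
  obtain ⟨S, S_count, S_sub⟩ : ∃ S : Set Y, S.Countable ∧ range u ⊆ closure S :=
    TopologicalSpace.isSeparable_range hu.continuous
  have hSne : S.Nonempty := by
    rcases S.eq_empty_or_nonempty with h | h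
    · exfalso
      rw [h, closure_empty] at S_sub
      exact S_sub (mem_range_self 0)
    · exact h
  obtain ⟨x, hx⟩ := S_count.exists_eq_range hSne
  -- the distance functions
  set f : ℕ → ℝ → ℝ := fun n t => dist (u t) (x n) with hf
  have hfl : ∀ n, LipschitzWith K (f n) := by
    intro n
    apply LipschitzWith.of_dist_le_mul
    intro s t
    rw [Real.dist_eq]
    calc |f n s - f n t| ≤ dist (u s) (u t) := abs_dist_sub_le _ _ _
      _ ≤ K * dist s t := hu.dist_le_mul s t
  -- the candidate metric derivative
  set m : ℝ → ℝ := fun t => ⨆ n, |deriv (f n) t| with hm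
  have hbdd : ∀ t, BddAbove (range fun n => |deriv (f n) t|) := by
    intro t
    exact ⟨K, by rintro r ⟨n, rfl⟩; exact abs_deriv_le_of_lipschitz (hfl n) t⟩
  have hm0 : ∀ t, 0 ≤ m t := fun t =>
    le_trans (abs_nonneg _) (le_ciSup (hbdd t) 0)
  have hmK : ∀ t, m t ≤ K := fun t =>
    ciSup_le fun n => abs_deriv_le_of_lipschitz (hfl n) t
  have hmmeas : Measurable m :=
    Measurable.iSup fun n => (measurable_deriv (f n)).abs
  have hmint : ∀ a b : ℝ, IntervalIntegrable m volume a b := by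
    intro a b
    rw [intervalIntegrable_iff]
    apply Integrable.mono' (g := fun _ => (K:ℝ))
    · exact integrableOn_const measure_Ioc_lt_top.ne
    · exact hmmeas.aestronglyMeasurable.restrict
    · exact Eventually.of_forall fun t => by
        rw [Real.norm_eq_abs, abs_of_nonneg (hm0 t)]; exact hmK t
  have hderint : ∀ n, ∀ a b : ℝ, IntervalIntegrable (fun t => |deriv (f n) t|) volume a b := by
    intro n a b
    rw [intervalIntegrable_iff]
    apply Integrable.mono' (g := fun _ => (K:ℝ))
    · exact integrableOn_const measure_Ioc_lt_top.ne
    · exact (measurable_deriv (f n)).abs.aestronglyMeasurable.restrict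
    · exact Eventually.of_forall fun t => by
        rw [Real.norm_eq_abs, abs_abs]; exact abs_deriv_le_of_lipschitz (hfl n) t
  -- the key FTC estimate
  have hfd : ∀ n, ∀ a b : ℝ, a ≤ b → |f n b - f n a| ≤ ∫ t in a..b, m t := by
    intro n a b hab
    rw [lipschitz_integral_deriv (hfl n) hab]
    calc |∫ t in a..b, deriv (f n) t| ≤ ∫ t in a..b, |deriv (f n) t| :=
          intervalIntegral.abs_integral_le_integral_abs hab
      _ ≤ ∫ t in a..b, m t := by
          apply intervalIntegral.integral_mono_on hab (hderint n a b) (hmint a b)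
          intro t _
          exact le_ciSup (hbdd t) n
  -- distance bounded by the integral of m
  have hdu : ∀ a b : ℝ, a ≤ b → dist (u a) (u b) ≤ ∫ t in a..b, m t := by
    intro a b hab
    apply le_of_forall_pos_le_add
    intro ε hε
    have hub : u b ∈ closure (range x) := by rw [← hx]; exact S_sub (mem_range_self b)
    obtain ⟨y, hy1, hy2⟩ := Metric.mem_closure_iff.1 hub (ε/2) (by linarith)
    obtain ⟨n, rfl⟩ := hy1
    calc dist (u a) (u b) ≤ dist (u a) (x n) + dist (x n) (u b) := dist_triangle _ _ _
      _ = f n a + dist (u b) (x n) := by rw [dist_comm (x n)]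
      _ ≤ (f n b + |f n a - f n b|) + ε/2 := by
          apply add_le_add _ hy2.le
          have := le_abs_self (f n a - f n b); linarith
      _ ≤ (ε/2 + (∫ t in a..b, m t)) + ε/2 := by
          apply add_le_add_left
          apply add_le_add hy2.le
          rw [abs_sub_comm]; exact hfd n a b hab
      _ = (∫ t in a..b, m t) + ε := by ring
  -- local integrability of m
  have hloc : LocallyIntegrable m volume := by
    rw [locallyIntegrable_iff]
    intro k hk
    obtain ⟨R, hR⟩ := hk.isBounded.subset_closedBall 0
    apply IntegrableOn.mono_set _ hR
    apply Integrable.mono' (g := fun _ => (K:ℝ))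
    · exact integrableOn_const measure_closedBall_lt_top.ne
    · exact hmmeas.aestronglyMeasurable.restrict
    · exact Eventually.of_forall fun t => by
        rw [Real.norm_eq_abs, abs_of_nonneg (hm0 t)]; exact hmK t
  have habsint : ∀ (σ r : ℝ), IntegrableOn (fun y => |m y - m σ|) (closedBall σ r) volume := by
    intro σ r
    apply Integrable.mono' (g := fun _ => (K:ℝ) + |m σ|)
    · exact integrableOn_const measure_closedBall_lt_top.ne
    · exact ((hmmeas.sub measurable_const).abs).aestronglyMeasurable.restrict
    · refine Eventually.of_forall fun t => ?_
      rw [Real.norm_eq_abs, abs_abs, sub_eq_add_neg]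
      calc |m t + -m σ| ≤ |m t| + |-m σ| := abs_add_le _ _
        _ = |m t| + |m σ| := by rw [abs_neg]
        _ ≤ (K:ℝ) + |m σ| := by
            have := hmK t; have := hm0 t
            rw [abs_of_nonneg (hm0 t)]; linarith
  -- the a.e. existence of the metric derivative
  have hae : ∀ᵐ σ ∂(volume : Measure ℝ),
      Tendsto (fun h => dist (u (σ + h)) (u σ) / |h|) (𝓝[≠] (0:ℝ)) (𝓝 (m σ)) := by
    have hdiff : ∀ᵐ σ ∂(volume : Measure ℝ), ∀ n, DifferentiableAt ℝ (f n) σ :=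
      ae_all_iff.2 fun n => (hfl n).ae_differentiableAt
    have hleb : ∀ᵐ σ ∂(volume : Measure ℝ),
        Tendsto (fun r => ⨍ y in closedBall σ r, |m y - m σ|) (𝓝[>] (0:ℝ)) (𝓝 0) := by
      filter_upwards [(Besicovitch.vitaliFamily (volume : Measure ℝ)).ae_tendsto_average_norm_sub
        hloc] with σ hσ
      have h2 := hσ.comp (Besicovitch.tendsto_filterAt volume σ)
      simpa [Real.norm_eq_abs, Function.comp_def] using h2
    filter_upwards [hdiff, hleb] with σ hdf hlb
    -- upper estimate, valid for every h ≠ 0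
    have hup : ∀ h : ℝ, h ≠ 0 → dist (u (σ + h)) (u σ) / |h|
        ≤ m σ + (∫ y in closedBall σ |h|, |m y - m σ|) / |h| := by
      intro h hne
      have hpos : (0:ℝ) < |h| := abs_pos.mpr hne
      have key : dist (u (σ + h)) (u σ) ≤ m σ * |h| + ∫ y in closedBall σ |h|, |m y - m σ| := by
        have main : ∀ a b : ℝ, a ≤ b → Set.Ioc a b ⊆ closedBall σ |h| →
            dist (u a) (u b) ≤ m σ * (b - a) + ∫ y in closedBall σ |h|, |m y - m σ| := by
          intro a b hab hsub
          have h1 : dist (u a) (u b) ≤ ∫ t in a..b, m t := hdu a b hab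
          have h2 : (∫ t in a..b, m t) = (∫ t in a..b, (m t - m σ)) + m σ * (b - a) := by
            rw [intervalIntegral.integral_sub (hmint _ _) intervalIntegrable_const,
              intervalIntegral.integral_const, smul_eq_mul]
            ring
          have h3 : (∫ t in a..b, (m t - m σ)) ≤ ∫ y in closedBall σ |h|, |m y - m σ| := by
            rw [intervalIntegral.integral_of_le hab]
            have hi1 : IntegrableOn (fun t => m t - m σ) (Set.Ioc a b) volume :=
              (hmint a b).1.sub ((intervalIntegrable_const (c := m σ) (a := a) (b := b)).1)
            have hi2 : IntegrableOn (fun t => |m t - m σ|) (Set.Ioc a b) volume :=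
              (habsint σ |h|).mono_set hsub
            calc (∫ t in Set.Ioc a b, (m t - m σ))
                ≤ ∫ t in Set.Ioc a b, |m t - m σ| :=
                  setIntegral_mono_on hi1 hi2 measurableSet_Ioc (fun t _ => le_abs_self _)
              _ ≤ ∫ y in closedBall σ |h|, |m y - m σ| :=
                  setIntegral_mono_set (habsint σ |h|)
                    (Eventually.of_forall fun y => abs_nonneg _)
                    (HasSubset.Subset.eventuallyLE hsub)
          linarith
        rcases lt_or_gt_of_ne hne with hneg | hposh
        · have habs : |h| = -h := abs_of_neg hneg
          have hsub : Set.Ioc (σ + h) σ ⊆ closedBall σ |h| := by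
            intro y hy
            rw [Real.closedBall_eq_Icc]
            exact ⟨by linarith [hy.1], by linarith [hy.2, abs_nonneg h]⟩
          have := main (σ + h) σ (by linarith) hsub
          have he : σ - (σ + h) = |h| := by linarith
          rw [he] at this
          exact this
        · have habs : |h| = h := abs_of_pos hposh
          have hsub : Set.Ioc σ (σ + h) ⊆ closedBall σ |h| := by
            intro y hy
            rw [Real.closedBall_eq_Icc]
            exact ⟨by linarith [hy.1, abs_nonneg h], by linarith [hy.2]⟩
          have := main σ (σ + h) (by linarith) hsub
          have he : σ + h - σ = |h| := by linarith
          rw [he, dist_comm] at this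
          exact this
      refine le_trans ((div_le_div_iff_of_pos_right hpos).mpr key) ?_
      rw [add_div, mul_div_assoc, div_self hpos.ne', mul_one]
    -- the correction term tends to zero
    have habs : Tendsto (fun h : ℝ => |h|) (𝓝[≠] (0:ℝ)) (𝓝[>] (0:ℝ)) := by
      apply tendsto_nhdsWithin_of_tendsto_nhds_of_eventually_within
      · simpa using ((continuous_abs.tendsto (0:ℝ)).mono_left nhdsWithin_le_nhds)
      · filter_upwards [self_mem_nhdsWithin] with h hh
        exact abs_pos.mpr hh
    have hBr : Tendsto (fun r : ℝ => (∫ y in closedBall σ r, |m y - m σ|) / r)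
        (𝓝[>] (0:ℝ)) (𝓝 0) := by
      have h2 : Tendsto (fun r : ℝ => 2 * ⨍ y in closedBall σ r, |m y - m σ|)
          (𝓝[>] (0:ℝ)) (𝓝 0) := by
        have := hlb.const_mul (2:ℝ)
        simpa using this
      apply h2.congr'
      filter_upwards [self_mem_nhdsWithin] with r hr
      have hrpos : (0:ℝ) < r := hr
      rw [setAverage_eq, Real.volume_real_closedBall hrpos.le, smul_eq_mul]
      field_simp
    have hB : Tendsto (fun h : ℝ => (∫ y in closedBall σ |h|, |m y - m σ|) / |h|)
        (𝓝[≠] (0:ℝ)) (𝓝 0) := hBr.comp habs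
    -- conclude
    rw [Metric.tendsto_nhds]
    intro ε hε
    obtain ⟨n₀, hn₀⟩ : ∃ n, m σ - ε/2 < |deriv (f n) σ| :=
      exists_lt_of_lt_ciSup (by linarith : m σ - ε/2 < m σ)
    have hq : Tendsto (fun h : ℝ => |f n₀ (σ+h) - f n₀ σ| / |h|) (𝓝[≠] (0:ℝ))
        (𝓝 |deriv (f n₀) σ|) := by
      have h' := (hdf n₀).hasDerivAt
      rw [hasDerivAt_iff_tendsto_slope] at h'
      have hmap : Tendsto (fun h : ℝ => σ + h) (𝓝[≠] (0:ℝ)) (𝓝[≠] σ) := by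
        apply tendsto_nhdsWithin_of_tendsto_nhds_of_eventually_within
        · simpa using (((continuous_add_left σ).tendsto (0:ℝ)).mono_left nhdsWithin_le_nhds)
        · filter_upwards [self_mem_nhdsWithin] with h hh
          simp only [mem_compl_iff, mem_singleton_iff] at hh ⊢
          intro hcon
          exact hh (by linarith)
      have := (h'.comp hmap).abs
      apply this.congr
      intro h
      simp only [Function.comp_apply]
      rw [slope_def_field, add_sub_cancel_left, abs_div]
    have hev1 : ∀ᶠ h : ℝ in 𝓝[≠] (0:ℝ),
        |deriv (f n₀) σ| - ε/2 < |f n₀ (σ+h) - f n₀ σ| / |h| :=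
      hq.eventually (eventually_gt_nhds (by linarith))
    have hev2 : ∀ᶠ h : ℝ in 𝓝[≠] (0:ℝ),
        (∫ y in closedBall σ |h|, |m y - m σ|) / |h| < ε := by
      have := hB.eventually (eventually_lt_nhds hε)
      simpa using this
    filter_upwards [hev1, hev2, self_mem_nhdsWithin] with h h1 h2 hne
    have hne' : (h:ℝ) ≠ 0 := hne
    have hpos : (0:ℝ) < |h| := abs_pos.mpr hne'
    have hlow : m σ - ε < dist (u (σ + h)) (u σ) / |h| := by
      have hd : |f n₀ (σ+h) - f n₀ σ| ≤ dist (u (σ + h)) (u σ) := abs_dist_sub_le _ _ _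
      have h3 : |f n₀ (σ+h) - f n₀ σ| / |h| ≤ dist (u (σ + h)) (u σ) / |h| := by
        gcongr
      calc m σ - ε < |deriv (f n₀) σ| - ε/2 := by linarith
        _ < |f n₀ (σ+h) - f n₀ σ| / |h| := h1
        _ ≤ _ := h3
    have hhigh : dist (u (σ + h)) (u σ) / |h| < m σ + ε :=
      lt_of_le_of_lt (hup h hne') (by linarith)
    rw [Real.dist_eq, abs_sub_lt_iff]
    constructor <;> linarith
  -- identify m with c a.e. on the interval
  have hmc : ∀ᵐ σ ∂(volume : Measure ℝ), σ ∈ Set.Ioo (-1:ℝ) 1 → m σ = c := by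
    filter_upwards [hae] with σ hσ hmem
    have h1 : mspeed u σ = m σ := hσ.limUnder_eq
    rw [← h1, hc σ (Set.mem_Icc_of_Ioo hmem)]
  have hc0 : 0 ≤ c := by
    have hfreq : ∃ᵐ σ ∂(volume : Measure ℝ), σ ∈ Set.Ioo (-1:ℝ) 1 := by
      rw [MeasureTheory.frequently_ae_mem_iff, Real.volume_Ioo]
      simp
    obtain ⟨σ, hσm, hσc⟩ := (hfreq.and_eventually hmc).exists
    rw [← hσc hσm]
    exact hm0 σ
  refine ⟨hc0, fun a b h1 h2 h3 => ?_⟩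
  have hne1 : ∀ᵐ t ∂(volume : Measure ℝ), t ≠ (1:ℝ) := by
    rw [ae_iff]
    simpa using (measure_singleton (1:ℝ) : (volume : Measure ℝ) {(1:ℝ)} = 0)
  have hint_eq : (∫ t in a..b, m t) = c * (b - a) := by
    have heq : (∫ t in a..b, m t) = ∫ t in a..b, c := by
      apply intervalIntegral.integral_congr_ae
      filter_upwards [hmc, hne1] with t ht htne hmem
      rw [Set.uIoc_of_le h2] at hmem
      exact ht ⟨lt_of_le_of_lt h1 hmem.1, lt_of_le_of_ne (hmem.2.trans h3) htne⟩
    rw [heq, intervalIntegral.integral_const, smul_eq_mul, mul_comm]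
  calc dist (u a) (u b) ≤ ∫ t in a..b, m t := hdu a b h2
    _ = c * (b - a) := hint_eq


section Geo
variable {Y : Type*} [MetricSpace Y]

lemma geo_dist {w : ℝ → Y} (hw : GeodesicSeg w (-1) 1) {s t : ℝ}
    (hs : s ∈ Set.Icc (-1:ℝ) 1) (ht : t ∈ Set.Icc (-1:ℝ) 1) :
    dist (w s) (w t) = dist (w (-1)) (w 1) / 2 * |s - t| := by
  have := hw s hs t ht
  have h2 : (1 - (-1) : ℝ) = 2 := by norm_num
  rw [h2] at this
  linarith

lemma geo_mspeed {w : ℝ → Y} (hw : GeodesicSeg w (-1) 1) {s : ℝ}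
    (hs : s ∈ Set.Ioo (-1:ℝ) 1) :
    mspeed w s = dist (w (-1)) (w 1) / 2 := by
  apply Filter.Tendsto.limUnder_eq
  have hδ : (0:ℝ) < min (1 - s) (s + 1) := by
    rcases hs with ⟨h1, h2⟩
    apply lt_min <;> linarith
  have hev : ∀ᶠ h in (𝓝[≠] (0:ℝ)),
      dist (w (s + h)) (w s) / |h| = dist (w (-1)) (w 1) / 2 := by
    rw [eventually_nhdsWithin_iff]
    filter_upwards [Metric.ball_mem_nhds (0:ℝ) hδ] with h hball hne
    have hne' : h ≠ 0 := hne
    rw [mem_ball, Real.dist_eq, sub_zero] at hball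
    have hmem : s + h ∈ Set.Icc (-1:ℝ) 1 := by
      constructor
      · have := abs_lt.1 (lt_of_lt_of_le hball (min_le_right _ _))
        linarith [this.1]
      · have := abs_lt.1 (lt_of_lt_of_le hball (min_le_left _ _))
        linarith [this.2]
    rw [geo_dist hw hmem (Set.mem_Icc_of_Ioo hs)]
    rw [add_sub_cancel_left]
    rw [mul_div_assoc, div_self (abs_ne_zero.mpr hne'), mul_one]
  exact Tendsto.congr' (hev.mono fun h hh => hh.symm) tendsto_const_nhds
  
lemma geo_energy {w : ℝ → Y} (hw : GeodesicSeg w (-1) 1) :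
    energy w = dist (w (-1)) (w 1) ^ 2 / 2 := by
  have hne1 : ∀ᵐ t ∂(volume : Measure ℝ), t ≠ (1:ℝ) := by
    rw [ae_iff]
    simpa using (measure_singleton (1:ℝ) : (volume : Measure ℝ) {(1:ℝ)} = 0)
  have heq : (∫ s in (-1:ℝ)..(1:ℝ), (mspeed w s)^2)
      = ∫ s in (-1:ℝ)..(1:ℝ), (dist (w (-1)) (w 1) / 2)^2 := by
    apply intervalIntegral.integral_congr_ae
    filter_upwards [hne1] with t htne hmem
    rw [Set.uIoc_of_le (by norm_num : (-1:ℝ) ≤ 1)] at hmem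
    rw [geo_mspeed hw ⟨hmem.1, lt_of_le_of_ne hmem.2 htne⟩]
  rw [energy, heq, intervalIntegral.integral_const, smul_eq_mul]
  ring

lemma const_energy {u : ℝ → Y} {c : ℝ} (hc : ∀ s ∈ Set.Icc (-1:ℝ) 1, mspeed u s = c) :
    energy u = 2 * c^2 := by
  have heq : (∫ s in (-1:ℝ)..(1:ℝ), (mspeed u s)^2) = ∫ s in (-1:ℝ)..(1:ℝ), c^2 := by
    apply intervalIntegral.integral_congr
    intro t ht
    rw [Set.uIcc_of_le (by norm_num : (-1:ℝ) ≤ 1)] at ht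
    simp only
    rw [hc t ht]
  rw [energy, heq, intervalIntegral.integral_const, smul_eq_mul]
  ring

end Geo

lemma midpoint_convex_nonpos {g : ℝ → ℝ} (hcont : ContinuousOn g (Set.Icc (-1:ℝ) 1))
    (hmid : ∀ a ∈ Set.Icc (-1:ℝ) 1, ∀ b ∈ Set.Icc (-1:ℝ) 1, g ((a+b)/2) ≤ (g a + g b)/2)
    (hg0 : g (-1) ≤ 0) (hg1 : g 1 ≤ 0) : ∀ x ∈ Set.Icc (-1:ℝ) 1, g x ≤ 0 := by
  by_contra hcon
  push_neg at hcon
  obtain ⟨x₀, hx₀, hx₀pos⟩ := hcon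
  obtain ⟨z, hz, hzmax⟩ := (isCompact_Icc (a := (-1:ℝ)) (b := 1)).exists_isMaxOn
    (Set.nonempty_Icc.2 (by norm_num)) hcont
  have hM : 0 < g z := lt_of_lt_of_le hx₀pos (hzmax hx₀)
  set S : Set ℝ := Set.Icc (-1:ℝ) 1 ∩ g ⁻¹' {g z} with hS
  have hSclosed : IsClosed S :=
    hcont.preimage_isClosed_of_isClosed isClosed_Icc isClosed_singleton
  have hSne : S.Nonempty := ⟨z, hz, rfl⟩
  have hSbdd : BddBelow S := ⟨-1, fun y hy => hy.1.1⟩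
  set y₀ := sInf S with hy₀
  have hy₀S : y₀ ∈ S := hSclosed.csInf_mem hSne hSbdd
  have hy₀M : g y₀ = g z := hy₀S.2
  have hy₀I : y₀ ∈ Set.Icc (-1:ℝ) 1 := hy₀S.1
  have hne1 : y₀ ≠ -1 := by intro h; rw [h] at hy₀M; linarith
  have hne2 : y₀ ≠ 1 := by intro h; rw [h] at hy₀M; linarith
  have hlt1 : -1 < y₀ := lt_of_le_of_ne hy₀I.1 (Ne.symm hne1)
  have hlt2 : y₀ < 1 := lt_of_le_of_ne hy₀I.2 hne2
  set r := min (y₀ + 1) (1 - y₀) with hr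
  have hrpos : 0 < r := lt_min (by linarith) (by linarith)
  have ha : y₀ - r ∈ Set.Icc (-1:ℝ) 1 := by
    constructor
    · have := min_le_left (y₀ + 1) (1 - y₀); linarith
    · linarith
  have hb : y₀ + r ∈ Set.Icc (-1:ℝ) 1 := by
    constructor
    · linarith
    · have := min_le_right (y₀ + 1) (1 - y₀); linarith
  have hmid' := hmid _ ha _ hb
  have he : ((y₀ - r) + (y₀ + r))/2 = y₀ := by ring
  rw [he] at hmid'
  have hga : g (y₀ - r) < g z := by
    have hle' : g (y₀ - r) ≤ g z := hzmax ha
    rcases lt_or_eq_of_le hle' with h | h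
    · exact h
    · exfalso
      have : y₀ - r ∈ S := ⟨ha, h⟩
      have := csInf_le hSbdd this
      linarith
  have hgb : g (y₀ + r) ≤ g z := hzmax hb
  
  rw [hy₀M] at hmid'
  linarith

lemma pointwise_bound {Y : Type*} [MetricSpace Y] (hnpc : CAT0 Y) (u w : ℝ → Y) (K : NNReal)
    (hKw : LipschitzWith K w)
    (hend0 : u (-1) = w (-1)) (hend1 : u 1 = w 1) (hwgeo : GeodesicSeg w (-1) 1)
    {c : ℝ}
    (hlen : ∀ a b : ℝ, -1 ≤ a → a ≤ b → b ≤ 1 → dist (u a) (u b) ≤ c * (b - a))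
    (hc2 : 2 * c^2 = 1) (hL2 : dist (w (-1)) (w 1) ^ 2 ≤ 2) :
    ∀ x ∈ Set.Icc (-1:ℝ) 1, dist (u x) (w x) ^ 2 ≤ (2 - dist (w (-1)) (w 1) ^ 2) / 4 := by
  intro x hx
  set L : ℝ := dist (w (-1)) (w 1) with hLdef
  set p : Y := u x with hpdef
  set g : ℝ → ℝ := fun y => dist p (w y)^2 - L^2/4 * y^2
    - ((1 - y)/2 * (dist p (w (-1))^2 - L^2/4) + (1 + y)/2 * (dist p (w 1)^2 - L^2/4)) with hgdef
  have hD : Continuous fun y => dist p (w y) := continuous_const.dist hKw.continuous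
  have hcont : Continuous g := by
    apply Continuous.sub
    · exact (hD.pow 2).sub (continuous_const.mul (continuous_id.pow 2))
    · apply Continuous.add
      · exact (((continuous_const.sub continuous_id).div_const 2).mul continuous_const)
      · exact (((continuous_const.add continuous_id).div_const 2).mul continuous_const)
  have hmid : ∀ a ∈ Set.Icc (-1:ℝ) 1, ∀ b ∈ Set.Icc (-1:ℝ) 1,
      g ((a+b)/2) ≤ (g a + g b)/2 := by
    intro a ha b hb
    have hmI : (a+b)/2 ∈ Set.Icc (-1:ℝ) 1 := by
      constructor
      · have := ha.1; have := hb.1; linarith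
      · have := ha.2; have := hb.2; linarith
    have hwm1 : dist (w a) (w ((a+b)/2)) = dist (w a) (w b) / 2 := by
      rw [geo_dist hwgeo ha hmI, geo_dist hwgeo ha hb]
      have e1 : a - (a+b)/2 = (a-b)/2 := by ring
      rw [e1, abs_div, abs_two]
      ring
    have hwm2 : dist (w ((a+b)/2)) (w b) = dist (w a) (w b) / 2 := by
      rw [geo_dist hwgeo hmI hb, geo_dist hwgeo ha hb]
      have e1 : (a+b)/2 - b = (a-b)/2 := by ring
      rw [e1, abs_div, abs_two]
      ring
    have key := hnpc p (w a) (w b) (w ((a+b)/2)) hwm1 hwm2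
    rw [geo_dist hwgeo ha hb] at key
    have habs : (L / 2 * |a - b|)^2 = L^2/4*(a-b)^2 := by
      rw [mul_pow, sq_abs]; ring
    rw [habs] at key
    have e : L^2/4*(((a+b)/2)^2) = L^2/4*((a^2+b^2)/2) - L^2/4*((a-b)^2)/4 := by ring
    simp only [hgdef]
    linarith [key, e]
  have hg0 : g (-1) ≤ 0 := by
    apply le_of_eq
    simp only [hgdef]
    ring
  have hg1 : g 1 ≤ 0 := by
    apply le_of_eq
    simp only [hgdef]
    ring
  have hgx := midpoint_convex_nonpos hcont.continuousOn hmid hg0 hg1 x hx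
  simp only [hgdef] at hgx
  have hc0 : 0 ≤ c := by nlinarith [hlen (-1) 1 (le_refl _) (by norm_num) (le_refl _), dist_nonneg (x := u (-1)) (y := u 1)]
  have hD1 : dist p (w (-1))^2 ≤ c^2 * (x+1)^2 := by
    have h1 : dist p (w (-1)) = dist (u (-1)) (u x) := by
      rw [hpdef, ← hend0, dist_comm]
    have h2 : dist (u (-1)) (u x) ≤ c * (x - (-1)) := hlen (-1) x (le_refl _) hx.1 hx.2
    have h3 : dist p (w (-1)) ≤ c * (x+1) := by rw [h1]; convert h2 using 2; ring
    calc dist p (w (-1))^2 ≤ (c * (x+1))^2 :=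
          pow_le_pow_left₀ dist_nonneg h3 2
      _ = c^2 * (x+1)^2 := by ring
  have hD2 : dist p (w 1)^2 ≤ c^2 * (1-x)^2 := by
    have h1 : dist p (w 1) = dist (u x) (u 1) := by rw [hpdef, ← hend1]
    have h2 : dist (u x) (u 1) ≤ c * (1 - x) := hlen x 1 hx.1 hx.2 (le_refl _)
    have h3 : dist p (w 1) ≤ c * (1-x) := by rw [h1]; exact h2
    calc dist p (w 1)^2 ≤ (c * (1-x))^2 := pow_le_pow_left₀ dist_nonneg h3 2
      _ = c^2 * (1-x)^2 := by ring
  have hx1 : (0:ℝ) ≤ 1 - x := by linarith [hx.2]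
  have hx2 : (0:ℝ) ≤ 1 + x := by linarith [hx.1]
  have k1 : (1 - x)/2 * (dist p (w (-1))^2) ≤ (1-x)/2 * (c^2 * (x+1)^2) :=
    mul_le_mul_of_nonneg_left hD1 (by linarith)
  have k2 : (1 + x)/2 * (dist p (w 1)^2) ≤ (1+x)/2 * (c^2 * (1-x)^2) :=
    mul_le_mul_of_nonneg_left hD2 (by linarith)
  have hq : (0:ℝ) ≤ (2 - L^2) * x^2 :=
    mul_nonneg (by linarith) (sq_nonneg x)
  nlinarith [hgx, k1, k2, hq, hc2]

/-- If constant-speed paths `u_j` with energy `1` share endpoints with geodesics `w_j`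
whose energies converge to `1`, then `u_j` and `w_j` become uniformly close. -/
theorem stmt10 {Y : Type*} [MetricSpace Y] [CompleteSpace Y] (hnpc : CAT0 Y)
    (u w : ℕ → ℝ → Y)
    (hLip : ∀ j, ∃ K : NNReal, LipschitzWith K (u j) ∧ LipschitzWith K (w j))
    (hend0 : ∀ j, u j (-1) = w j (-1))
    (hend1 : ∀ j, u j 1 = w j 1)
    (hwgeo : ∀ j, GeodesicSeg (w j) (-1) 1)
    (hconst : ∀ j, ∃ c : ℝ, ∀ s ∈ Set.Icc (-1:ℝ) 1, mspeed (u j) s = c)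
    (hle : ∀ j, energy (w j) ≤ energy (u j))
    (hone : ∀ j, energy (u j) = 1)
    (hlim : Tendsto (fun j => energy (w j)) atTop (nhds 1)) :
    Tendsto (fun j => ⨆ x : Set.Icc (-1:ℝ) 1, dist (u j x) (w j x)) atTop (nhds 0) := by
  choose K hKu hKw using hLip
  choose c hc using hconst
  have hlen := fun j => length_bound (u j) (K j) (hKu j) (hc j)
  have hc2 : ∀ j, 2 * (c j)^2 = 1 := fun j => by
    have h1 := const_energy (hc j)
    rw [hone j] at h1
    linarith
  have hwE : ∀ j, energy (w j) = dist (w j (-1)) (w j 1)^2/2 := fun j => geo_energy (hwgeo j)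
  have hL2 : ∀ j, dist (w j (-1)) (w j 1)^2 ≤ 2 := fun j => by
    have h1 := hle j
    rw [hone j, hwE j] at h1
    linarith
  have hpt : ∀ j, ∀ x ∈ Set.Icc (-1:ℝ) 1,
      dist (u j x) (w j x)^2 ≤ (2 - dist (w j (-1)) (w j 1)^2)/4 := fun j =>
    pointwise_bound hnpc (u j) (w j) (K j) (hKw j) (hend0 j) (hend1 j) (hwgeo j)
      (hlen j).2 (hc2 j) (hL2 j)
  haveI : Nonempty (Set.Icc (-1:ℝ) 1) := ⟨⟨0, by norm_num⟩⟩
  set b : ℕ → ℝ := fun j => Real.sqrt ((2 - dist (w j (-1)) (w j 1)^2)/4) with hbdef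
  have hSle : ∀ j, (⨆ x : Set.Icc (-1:ℝ) 1, dist (u j x) (w j x)) ≤ b j := by
    intro j
    apply ciSup_le
    intro x
    exact Real.le_sqrt_of_sq_le (hpt j x x.2)
  have hS0 : ∀ j, 0 ≤ ⨆ x : Set.Icc (-1:ℝ) 1, dist (u j x) (w j x) := fun j =>
    Real.iSup_nonneg fun x => dist_nonneg
  have hb0 : Tendsto b atTop (𝓝 0) := by
    have h3 : Tendsto (fun j => (1 - energy (w j))/2) atTop (𝓝 0) := by
      have h4 := (tendsto_const_nhds : Tendsto (fun _ : ℕ => (1:ℝ)) atTop (𝓝 1)).sub hlim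
      simpa using h4.div_const 2
    have h1 : Tendsto (fun j => (2 - dist (w j (-1)) (w j 1)^2)/4) atTop (𝓝 0) := by
      apply h3.congr
      intro j
      rw [hwE j]
      ring
    have h5 := (Real.continuous_sqrt.tendsto 0).comp h1
    rw [Real.sqrt_zero] at h5; exact h5
  exact squeeze_zero hS0 hSle hb0
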